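/- For the 5-qubit code with normal per-qubit error density with parameter σ, the syndrome probabilities satisfy E[P₀] = (1 + 15σ⁸)/16 and E[P_s] = (1 - σ⁸)/16 for each 1 ≤ s ≤ 15; consequently E[P₀] + 15·E[P₁] = 1. -/

import Mathlib

open Real

/-- The normal error density with parameter `σ`. -/
noncomputable def normalDensity (σ : ℝ) (θ₀ : ℝ) : ℝ :=
  (1 / (2 * π ^ 2)) * (1 - σ ^ 2) / (1 + σ ^ 2 - 2 * σ * Real.cos θ₀) ^ 2

/-- `e₁ = Ē[cos²θ₀ sin²θ₀]` for the normal density. -/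
noncomputable def e₁ (σ : ℝ) : ℝ :=
  ∫ θ₀ in (0:ℝ)..π, normalDensity σ θ₀ * (Real.cos θ₀ ^ 2 * Real.sin θ₀ ^ 2)

/-- `e₂ = Ē[sin⁴θ₀]` for the normal density. -/
noncomputable def e₂ (σ : ℝ) : ℝ :=
  ∫ θ₀ in (0:ℝ)..π, normalDensity σ θ₀ * Real.sin θ₀ ^ 4

/-- `E[P₀]`, the probability of measuring syndrome `0`. -/
noncomputable def EP0 (σ : ℝ) : ℝ :=
  (4 * π) ^ 5 * (e₁ σ ^ 5 + (30 / 3 ^ 3) * e₁ σ ^ 2 * e₂ σ ^ 3 +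
    (15 / 3 ^ 4) * e₁ σ * e₂ σ ^ 4 + (18 / 3 ^ 5) * e₂ σ ^ 5)

/-- `E[P_s]` for `1 ≤ s ≤ 15`, the probability of measuring a nonzero syndrome `s`. -/
noncomputable def EPs (σ : ℝ) : ℝ :=
  (4 * π) ^ 5 * ((1 / 3) * e₁ σ ^ 4 * e₂ σ + (6 / 3 ^ 2) * e₁ σ ^ 3 * e₂ σ ^ 2 +
    (16 / 3 ^ 3) * e₁ σ ^ 2 * e₂ σ ^ 3 + (26 / 3 ^ 4) * e₁ σ * e₂ σ ^ 4 +
    (15 / 3 ^ 5) * e₂ σ ^ 5)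

/-! ### Auxiliary lemmas -/

lemma Dpos {σ : ℝ} (h0 : 0 ≤ σ) (h1 : σ < 1) (θ : ℝ) :
    0 < 1 + σ ^ 2 - 2 * σ * Real.cos θ := by
  nlinarith [Real.cos_le_one θ, Real.neg_one_le_cos θ, sq_nonneg (1 - σ)]

lemma gpos {σ : ℝ} (h0 : 0 ≤ σ) (h1 : σ < 1) (θ : ℝ) :
    0 < 1 - σ * Real.cos θ := by
  nlinarith [Real.cos_le_one θ, Real.neg_one_le_cos θ]

/-- Explicit antiderivative family. -/
noncomputable def G (σ A B C E H Q : ℝ) (t : ℝ) : ℝ :=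
  A * t + B * Real.sin t + C * (Real.sin t * Real.cos t)
    + E * Real.arctan (σ * Real.sin t / (1 - σ * Real.cos t))
    + H * (Real.sin t / (1 + σ ^ 2 - 2 * σ * Real.cos t))
    + Q * (Real.sin t * Real.cos t ^ 3)

lemma hasDerivAt_G (σ A B C E H Q : ℝ) (h0 : 0 ≤ σ) (h1 : σ < 1) (θ : ℝ) :
    HasDerivAt (G σ A B C E H Q)
      (A + B * Real.cos θ + C * (2 * Real.cos θ ^ 2 - 1)
        + E * (σ * (Real.cos θ - σ) / (1 + σ ^ 2 - 2 * σ * Real.cos θ))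
        + H * ((Real.cos θ * (1 + σ ^ 2 - 2 * σ * Real.cos θ)
            - 2 * σ * (1 - Real.cos θ ^ 2)) / (1 + σ ^ 2 - 2 * σ * Real.cos θ) ^ 2)
        + Q * (4 * Real.cos θ ^ 4 - 3 * Real.cos θ ^ 2)) θ := by
  have hD := Dpos h0 h1 θ
  have hg := gpos h0 h1 θ
  have hpy := Real.sin_sq_add_cos_sq θ
  have hA : HasDerivAt (fun t : ℝ => A * t) A θ := by
    simpa using (hasDerivAt_id θ).const_mul A
  have hB : HasDerivAt (fun t : ℝ => B * Real.sin t) (B * Real.cos θ) θ :=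
    (Real.hasDerivAt_sin θ).const_mul B
  have hC : HasDerivAt (fun t : ℝ => C * (Real.sin t * Real.cos t))
      (C * (2 * Real.cos θ ^ 2 - 1)) θ := by
    have := ((Real.hasDerivAt_sin θ).mul (Real.hasDerivAt_cos θ)).const_mul C
    refine this.congr_deriv ?_
    linear_combination (-C) * hpy
  have hE : HasDerivAt (fun t : ℝ => E * Real.arctan (σ * Real.sin t / (1 - σ * Real.cos t)))
      (E * (σ * (Real.cos θ - σ) / (1 + σ ^ 2 - 2 * σ * Real.cos θ))) θ := by
    have hnum : HasDerivAt (fun t : ℝ => σ * Real.sin t) (σ * Real.cos θ) θ :=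
      (Real.hasDerivAt_sin θ).const_mul σ
    have hden : HasDerivAt (fun t : ℝ => 1 - σ * Real.cos t) (-(σ * -Real.sin θ)) θ :=
      ((Real.hasDerivAt_cos θ).const_mul σ).const_sub 1
    have hu := hnum.div hden (ne_of_gt hg)
    have h3 : (1 - σ * Real.cos θ) ^ 2 ≠ 0 := pow_ne_zero 2 (ne_of_gt hg)
    have hD' : (1 + σ ^ 2 - 2 * σ * Real.cos θ) ≠ 0 := ne_of_gt hD
    have hkey : 1 + (σ * Real.sin θ / (1 - σ * Real.cos θ)) ^ 2
        = (1 + σ ^ 2 - 2 * σ * Real.cos θ) / (1 - σ * Real.cos θ) ^ 2 := by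
      field_simp
      linear_combination σ ^ 2 * hpy
    have hnum2 : σ * Real.cos θ * (1 - σ * Real.cos θ) - σ * Real.sin θ * -(σ * -Real.sin θ)
        = σ * (Real.cos θ - σ) := by linear_combination (-σ ^ 2) * hpy
    have := hu.arctan.const_mul E
    simp only [Pi.div_apply] at this
    rw [hnum2, hkey, one_div_div] at this
    refine this.congr_deriv ?_
    field_simp
  have hH : HasDerivAt (fun t : ℝ => H * (Real.sin t / (1 + σ ^ 2 - 2 * σ * Real.cos t)))
      (H * ((Real.cos θ * (1 + σ ^ 2 - 2 * σ * Real.cos θ)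
          - 2 * σ * (1 - Real.cos θ ^ 2)) / (1 + σ ^ 2 - 2 * σ * Real.cos θ) ^ 2)) θ := by
    have hden : HasDerivAt (fun t : ℝ => 1 + σ ^ 2 - 2 * σ * Real.cos t)
        (-(2 * σ * -Real.sin θ)) θ :=
      ((Real.hasDerivAt_cos θ).const_mul (2 * σ)).const_sub (1 + σ ^ 2)
    have := ((Real.hasDerivAt_sin θ).div hden (ne_of_gt hD)).const_mul H
    refine this.congr_deriv ?_
    linear_combination (-(2 * σ * H / (1 + σ ^ 2 - 2 * σ * Real.cos θ) ^ 2)) * hpy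
  have hQ : HasDerivAt (fun t : ℝ => Q * (Real.sin t * Real.cos t ^ 3))
      (Q * (4 * Real.cos θ ^ 4 - 3 * Real.cos θ ^ 2)) θ := by
    have hc3 : HasDerivAt (fun t : ℝ => Real.cos t ^ 3)
        ((3 : ℕ) * Real.cos θ ^ 2 * -Real.sin θ) θ := by
      exact (Real.hasDerivAt_cos θ).pow 3
    have := ((Real.hasDerivAt_sin θ).mul hc3).const_mul Q
    refine this.congr_deriv ?_
    push_cast
    linear_combination (-(3 * Q * Real.cos θ ^ 2)) * hpy
  exact ((((hA.add hB).add hC).add hE).add hH).add hQ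

lemma integral_G {σ : ℝ} (A B C E H Q : ℝ) (h0 : 0 ≤ σ) (h1 : σ < 1) {g : ℝ → ℝ}
    (hgc : Continuous g)
    (hpt : ∀ θ : ℝ, A + B * Real.cos θ + C * (2 * Real.cos θ ^ 2 - 1)
        + E * (σ * (Real.cos θ - σ) / (1 + σ ^ 2 - 2 * σ * Real.cos θ))
        + H * ((Real.cos θ * (1 + σ ^ 2 - 2 * σ * Real.cos θ)
            - 2 * σ * (1 - Real.cos θ ^ 2)) / (1 + σ ^ 2 - 2 * σ * Real.cos θ) ^ 2)
        + Q * (4 * Real.cos θ ^ 4 - 3 * Real.cos θ ^ 2) = g θ) :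
    ∫ θ in (0:ℝ)..π, g θ = A * π := by
  have key : ∀ θ ∈ Set.uIcc (0:ℝ) π, HasDerivAt (G σ A B C E H Q) (g θ) θ := by
    intro θ _
    have := hasDerivAt_G σ A B C E H Q h0 h1 θ
    rwa [hpt θ] at this
  rw [intervalIntegral.integral_eq_sub_of_hasDerivAt key (hgc.intervalIntegrable 0 π)]
  simp [G, Real.sin_pi, Real.cos_pi, Real.sin_zero, Real.cos_zero]

lemma cont_aux {σ : ℝ} (h0 : 0 ≤ σ) (h1 : σ < 1) (p : ℝ → ℝ) (hp : Continuous p) :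
    Continuous fun θ => normalDensity σ θ * p (Real.cos θ) := by
  unfold normalDensity
  apply Continuous.mul
  · apply Continuous.div (by fun_prop) (by fun_prop)
    exact fun x => pow_ne_zero 2 (ne_of_gt (Dpos h0 h1 x))
  · exact hp.comp Real.continuous_cos

lemma e1_eval {σ : ℝ} (h0 : 0 ≤ σ) (h1 : σ < 1) :
    e₁ σ = (1 + 3 * σ ^ 2) / (16 * π) := by
  have hrw : e₁ σ = ∫ θ in (0:ℝ)..π,
      normalDensity σ θ * (Real.cos θ ^ 2 * (1 - Real.cos θ ^ 2)) := by
    unfold e₁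
    apply intervalIntegral.integral_congr
    intro x _
    beta_reduce
    rw [Real.sin_sq]
  have hgc : Continuous fun θ => normalDensity σ θ * (Real.cos θ ^ 2 * (1 - Real.cos θ ^ 2)) :=
    cont_aux h0 h1 (fun c => c ^ 2 * (1 - c ^ 2)) (by fun_prop)
  have hπ := Real.pi_ne_zero
  rcases eq_or_lt_of_le h0 with h | h
  · -- σ = 0
    subst h
    rw [hrw, integral_G (1/(16*π^2)) 0 (1/(16*π^2)) 0 0 (-(1/(8*π^2))) le_rfl h1 hgc ?_]
    · field_simp; ring
    · intro θ
      have hD := Dpos (σ := 0) le_rfl h1 θ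
      unfold normalDensity
      field_simp
      ring
  · -- σ > 0
    have hσ := ne_of_gt h
    rw [hrw, integral_G ((1+3*σ^2)/(16*π^2)) (-((1-σ^2)*(1+σ^2)/(8*π^2*σ^3)))
        (-((1-σ^2)/(16*π^2*σ^2))) ((1+σ^2)*(3-2*σ^2+3*σ^4)/(16*π^2*σ^4))
        (-((1-σ^2)*(1+σ^2)^2/(16*π^2*σ^3))) 0 h0 h1 hgc ?_]
    · field_simp
    · intro θ
      have hD := Dpos h0 h1 θ
      have hD' := ne_of_gt hD
      have hD'' : 1 + σ ^ 2 - σ * Real.cos θ * 2 ≠ 0 := ne_of_gt (by linarith)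
      unfold normalDensity
      field_simp
      ring

lemma e2_eval {σ : ℝ} (h0 : 0 ≤ σ) (h1 : σ < 1) :
    e₂ σ = 3 * (1 - σ ^ 2) / (16 * π) := by
  have hrw : e₂ σ = ∫ θ in (0:ℝ)..π,
      normalDensity σ θ * ((1 - Real.cos θ ^ 2) ^ 2) := by
    unfold e₂
    apply intervalIntegral.integral_congr
    intro x _
    beta_reduce
    rw [show Real.sin x ^ 4 = (Real.sin x ^ 2) ^ 2 by ring, Real.sin_sq]
  have hgc : Continuous fun θ => normalDensity σ θ * ((1 - Real.cos θ ^ 2) ^ 2) :=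
    cont_aux h0 h1 (fun c => (1 - c ^ 2) ^ 2) (by fun_prop)
  have hπ := Real.pi_ne_zero
  rcases eq_or_lt_of_le h0 with h | h
  · subst h
    rw [hrw, integral_G (3/(16*π^2)) 0 (-(5/(16*π^2))) 0 0 (1/(8*π^2)) le_rfl h1 hgc ?_]
    · field_simp; ring
    · intro θ
      have hD := Dpos (σ := 0) le_rfl h1 θ
      unfold normalDensity
      field_simp
      ring
  · have hσ := ne_of_gt h
    rw [hrw, integral_G (3*(1-σ^2)/(16*π^2)) ((1-σ^2)*(1+σ^2)/(8*π^2*σ^3))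
        ((1-σ^2)/(16*π^2*σ^2)) (-(3*(1+σ^2)*(1-σ^2)^2/(16*π^2*σ^4)))
        ((1-σ^2)^3/(16*π^2*σ^3)) 0 h0 h1 hgc ?_]
    · field_simp
    · intro θ
      have hD := Dpos h0 h1 θ
      have hD' := ne_of_gt hD
      have hD'' : 1 + σ ^ 2 - σ * Real.cos θ * 2 ≠ 0 := ne_of_gt (by linarith)
      unfold normalDensity
      field_simp
      ring

theorem syndrome_probabilities_normal (σ : ℝ) (hσ : σ ∈ Set.Ico (0:ℝ) 1) :
    EP0 σ = (1 + 15 * σ ^ 8) / 16 ∧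
    EPs σ = (1 - σ ^ 8) / 16 ∧
    EP0 σ + 15 * EPs σ = 1 := by
  obtain ⟨h0, h1⟩ := hσ
  have he1 := e1_eval h0 h1
  have he2 := e2_eval h0 h1
  have hπ := Real.pi_ne_zero
  have hP0 : EP0 σ = (1 + 15 * σ ^ 8) / 16 := by
    unfold EP0
    rw [he1, he2]
    field_simp
    ring
  have hPs : EPs σ = (1 - σ ^ 8) / 16 := by
    unfold EPs
    rw [he1, he2]
    field_simp
    ring
  exact ⟨hP0, hPs, by rw [hP0, hPs]; ring⟩
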